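/- Suppose t, s ∈ ℝ satisfy A(t,s) > 4 r e^{s+t}. Then (∂²φ/∂s∂t)(t,s) = 16 r e^{2s+2t} [ (a cos β − r)(e^{2s+2t} + d₂²) + (a cos β + r)(e^{2t} + d₁² e^{2s}) ] / (A(t,s)² − 16 r² e^{2s+2t})^{3/2}. -/

import Mathlib

open Real

noncomputable section

/-- Inverse hyperbolic cosine. -/
def arcosh (x : ℝ) : ℝ := Real.log (x + Real.sqrt (x ^ 2 - 1))

/-- `d₁ = √(a² + r² − 2ar cos β)`. -/
def d1 (a r β : ℝ) : ℝ := Real.sqrt (a ^ 2 + r ^ 2 - 2 * a * r * Real.cos β)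

/-- `d₂ = √(a² + r² + 2ar cos β)`. -/
def d2 (a r β : ℝ) : ℝ := Real.sqrt (a ^ 2 + r ^ 2 + 2 * a * r * Real.cos β)

/-- `A(t,s) = e^{2s+2t} + e^{2t} + d₁² e^{2s} + d₂²`. -/
def Afun (a r β t s : ℝ) : ℝ :=
  Real.exp (2 * s + 2 * t) + Real.exp (2 * t) + d1 a r β ^ 2 * Real.exp (2 * s) +
    d2 a r β ^ 2

/-- `φ(t,s) = arcosh(A(t,s)/(4 r e^{s+t}))`, the lifted distance function. -/
def phi (a r β t s : ℝ) : ℝ := _root_.arcosh (Afun a r β t s / (4 * r * Real.exp (s + t)))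

lemma hasDerivAt_arcosh {x : ℝ} (hx : 1 < x) :
    HasDerivAt _root_.arcosh (1 / Real.sqrt (x ^ 2 - 1)) x := by
  have h1 : (0:ℝ) < x ^ 2 - 1 := by nlinarith
  have hs : 0 < Real.sqrt (x ^ 2 - 1) := Real.sqrt_pos.mpr h1
  have hsq : HasDerivAt (fun y : ℝ => Real.sqrt (y ^ 2 - 1))
      (1 / (2 * Real.sqrt (x ^ 2 - 1)) * (2 * x)) x := by
    have hinner : HasDerivAt (fun y : ℝ => y ^ 2 - 1) (2 * x) x := by
      simpa using (hasDerivAt_pow 2 x).sub_const 1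
    exact (Real.hasDerivAt_sqrt h1.ne').comp x hinner
  have hg : HasDerivAt (fun y : ℝ => y + Real.sqrt (y ^ 2 - 1))
      (1 + 1 / (2 * Real.sqrt (x ^ 2 - 1)) * (2 * x)) x :=
    (hasDerivAt_id x).add hsq
  have hgpos : 0 < x + Real.sqrt (x ^ 2 - 1) := by positivity
  have hlog := hg.log hgpos.ne'
  have heq : (1 + 1 / (2 * Real.sqrt (x ^ 2 - 1)) * (2 * x)) / (x + Real.sqrt (x ^ 2 - 1))
      = 1 / Real.sqrt (x ^ 2 - 1) := by
    have h2 : Real.sqrt (x ^ 2 - 1) ^ 2 = x ^ 2 - 1 := Real.sq_sqrt h1.le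
    field_simp
    nlinarith [h2]
  rw [heq] at hlog
  exact hlog

lemma afun_pos (a r β t s : ℝ) (hr : 0 < r)
    (h : 4 * r * Real.exp (s + t) < Afun a r β t s) : 0 < Afun a r β t s := by
  have := Real.exp_pos (s + t); nlinarith

lemma dpos (a r β t s : ℝ) (hr : 0 < r)
    (h : 4 * r * Real.exp (s + t) < Afun a r β t s) :
    0 < Afun a r β t s ^ 2 - 16 * r ^ 2 * Real.exp (2 * s + 2 * t) := by
  have hE : (0:ℝ) < Real.exp (s + t) := Real.exp_pos _
  have hEE : Real.exp (s + t) * Real.exp (s + t) = Real.exp (2 * s + 2 * t) := by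
    rw [← Real.exp_add]; ring_nf
  have hden : (0:ℝ) < 4 * r * Real.exp (s + t) := by positivity
  have key : 0 < (Afun a r β t s - 4 * r * Real.exp (s + t))
      * (Afun a r β t s + 4 * r * Real.exp (s + t)) :=
    mul_pos (by linarith) (by linarith)
  have hexp : (Afun a r β t s - 4 * r * Real.exp (s + t))
      * (Afun a r β t s + 4 * r * Real.exp (s + t))
      = Afun a r β t s ^ 2 - 16 * r ^ 2 * Real.exp (2 * s + 2 * t) := by
    rw [← hEE]; ring
  linarith [hexp ▸ key]

lemma inner_deriv (a r β t s : ℝ) (hr : 0 < r)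
    (h : 4 * r * Real.exp (s + t) < Afun a r β t s) :
    deriv (fun t' => phi a r β t' s) t =
      (Real.exp (2*s+2*t) + Real.exp (2*t) - d1 a r β ^ 2 * Real.exp (2*s) - d2 a r β ^ 2)
        / Real.sqrt (Afun a r β t s ^ 2 - 16 * r ^ 2 * Real.exp (2 * s + 2 * t)) := by
  have hE : (0:ℝ) < Real.exp (s + t) := Real.exp_pos _
  have hden : (0:ℝ) < 4 * r * Real.exp (s + t) := by positivity
  have hEE : Real.exp (s + t) * Real.exp (s + t) = Real.exp (2 * s + 2 * t) := by
    rw [← Real.exp_add]; ring_nf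
  set D := Afun a r β t s ^ 2 - 16 * r ^ 2 * Real.exp (2 * s + 2 * t) with hDdef
  have hD : 0 < D := dpos a r β t s hr h
  have hsD : 0 < Real.sqrt D := Real.sqrt_pos.mpr hD
  -- derivative of numerator A(t', s) in t'
  have hnum : HasDerivAt (fun t' => Afun a r β t' s)
      (2 * Real.exp (2*s+2*t) + 2 * Real.exp (2*t)) t := by
    have h1 : HasDerivAt (fun t' : ℝ => Real.exp (2*s+2*t')) (Real.exp (2*s+2*t) * 2) t := by
      have := (((hasDerivAt_id t).const_mul (2:ℝ)).const_add (2*s)).exp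
      simpa using this
    have h2 : HasDerivAt (fun t' : ℝ => Real.exp (2*t')) (Real.exp (2*t) * 2) t := by
      have := ((hasDerivAt_id t).const_mul (2:ℝ)).exp
      simpa using this
    have h3 := ((h1.add h2).add_const (d1 a r β ^ 2 * Real.exp (2*s))).add_const (d2 a r β ^ 2)
    simp only [Afun]
    exact h3.congr_deriv (by ring)
  -- derivative of denominator
  have hden' : HasDerivAt (fun t' : ℝ => 4 * r * Real.exp (s + t'))
      (4 * r * Real.exp (s + t)) t := by
    have : HasDerivAt (fun t' : ℝ => Real.exp (s + t')) (Real.exp (s + t) * 1) t :=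
      ((hasDerivAt_id t).const_add s).exp
    simpa using this.const_mul (4 * r)
  have hu : HasDerivAt (fun t' => Afun a r β t' s / (4 * r * Real.exp (s + t')))
      (((2 * Real.exp (2*s+2*t) + 2 * Real.exp (2*t)) * (4 * r * Real.exp (s + t))
        - Afun a r β t s * (4 * r * Real.exp (s + t))) / (4 * r * Real.exp (s + t)) ^ 2) t :=
    hnum.div hden' hden.ne'
  have hu1 : 1 < Afun a r β t s / (4 * r * Real.exp (s + t)) := (one_lt_div hden).mpr h
  have hcomp := (_root_.hasDerivAt_arcosh hu1).comp t hu
  have hphi : (fun t' => phi a r β t' s)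
      = _root_.arcosh ∘ (fun t' => Afun a r β t' s / (4 * r * Real.exp (s + t'))) := rfl
  rw [hphi]
  rw [hcomp.deriv]
  -- simplify sqrt(u^2 - 1)
  have husq : (Afun a r β t s / (4 * r * Real.exp (s + t))) ^ 2 - 1
      = D / (4 * r * Real.exp (s + t)) ^ 2 := by
    rw [hDdef, ← hEE]; field_simp; ring
  rw [husq, Real.sqrt_div hD.le, Real.sqrt_sq hden.le]
  have hB : Afun a r β t s = Real.exp (2*s+2*t) + Real.exp (2*t)
      + d1 a r β ^ 2 * Real.exp (2*s) + d2 a r β ^ 2 := rfl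
  rw [hB]
  field_simp
  ring

lemma div_sqrt_aux (Bs B Ds D N w : ℝ) (hw : 0 < w) (hw2 : w ^ 2 = D)
    (key : Bs * D - B * Ds / 2 = N) :
    (Bs * w - B * (1 / (2 * w) * Ds)) / w ^ 2 = N / w ^ 3 := by
  have hwne : w ≠ 0 := hw.ne'
  subst hw2 key
  field_simp

/-- Explicit formula for `φ''_st` (formula (3.2) of the paper). -/
theorem mixed_derivative_phi_formula (a r β t s : ℝ) (ha : 0 ≤ a) (hr : 0 < r)
    (hβ : β ∈ Set.Ioc 0 (π / 2))
    (h : 4 * r * Real.exp (s + t) < Afun a r β t s) :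
    deriv (fun s' => deriv (fun t' => phi a r β t' s') t) s =
      16 * r * Real.exp (2 * s + 2 * t) *
          ((a * Real.cos β - r) * (Real.exp (2 * s + 2 * t) + d2 a r β ^ 2) +
            (a * Real.cos β + r) * (Real.exp (2 * t) + d1 a r β ^ 2 * Real.exp (2 * s))) /
        (Afun a r β t s ^ 2 - 16 * r ^ 2 * Real.exp (2 * s + 2 * t)) ^ ((3 : ℝ) / 2) := by
  obtain ⟨hβ0, hβ2⟩ := hβ
  have hc0 : 0 ≤ Real.cos β := Real.cos_nonneg_of_mem_Icc ⟨by linarith [Real.pi_pos], hβ2⟩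
  have hc1 : Real.cos β ≤ 1 := Real.cos_le_one β
  have hd1 : d1 a r β ^ 2 = a ^ 2 + r ^ 2 - 2 * a * r * Real.cos β :=
    Real.sq_sqrt (by nlinarith [sq_nonneg (a - r), mul_nonneg (mul_nonneg ha hr.le) (sub_nonneg.mpr hc1)])
  have hd2 : d2 a r β ^ 2 = a ^ 2 + r ^ 2 + 2 * a * r * Real.cos β :=
    Real.sq_sqrt (by positivity)
  -- the explicit inner-derivative function of s'
  set g : ℝ → ℝ := fun s' =>
    (Real.exp (2*s'+2*t) + Real.exp (2*t) - d1 a r β ^ 2 * Real.exp (2*s') - d2 a r β ^ 2)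
      / Real.sqrt (Afun a r β t s' ^ 2 - 16 * r ^ 2 * Real.exp (2 * s' + 2 * t)) with hgdef
  -- eventually the hypothesis holds
  have hev : ∀ᶠ s' in nhds s, 4 * r * Real.exp (s' + t) < Afun a r β t s' := by
    have hf : ContinuousAt (fun s' => 4 * r * Real.exp (s' + t)) s := by fun_prop
    have hg' : ContinuousAt (fun s' => Afun a r β t s') s := by
      simp only [Afun]; fun_prop
    exact hf.eventually_lt hg' h
  have hEq : (fun s' => deriv (fun t' => phi a r β t' s') t) =ᶠ[nhds s] g :=
    hev.mono fun s' hs' => inner_deriv a r β t s' hr hs'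
  rw [hEq.deriv_eq]
  -- now compute deriv g s
  have hD : 0 < Afun a r β t s ^ 2 - 16 * r ^ 2 * Real.exp (2 * s + 2 * t) :=
    dpos a r β t s hr h
  set D := Afun a r β t s ^ 2 - 16 * r ^ 2 * Real.exp (2 * s + 2 * t) with hDdef
  have hw : 0 < Real.sqrt D := Real.sqrt_pos.mpr hD
  have hw2 : Real.sqrt D ^ 2 = D := Real.sq_sqrt hD.le
  have he1 : HasDerivAt (fun s' : ℝ => Real.exp (2*s'+2*t)) (Real.exp (2*s+2*t) * 2) s := by
    have := (((hasDerivAt_id s).const_mul (2:ℝ)).add_const (2*t)).exp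
    simpa using this
  have he2 : HasDerivAt (fun s' : ℝ => Real.exp (2*s')) (Real.exp (2*s) * 2) s := by
    have := ((hasDerivAt_id s).const_mul (2:ℝ)).exp
    simpa using this
  have hB : HasDerivAt (fun s' =>
      Real.exp (2*s'+2*t) + Real.exp (2*t) - d1 a r β ^ 2 * Real.exp (2*s') - d2 a r β ^ 2)
      (Real.exp (2*s+2*t) * 2 - d1 a r β ^ 2 * (Real.exp (2*s) * 2)) s := by
    have := ((he1.add_const (Real.exp (2*t))).sub
      (he2.const_mul (d1 a r β ^ 2))).sub_const (d2 a r β ^ 2)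
    exact this
  have hA : HasDerivAt (fun s' => Afun a r β t s')
      (Real.exp (2*s+2*t) * 2 + d1 a r β ^ 2 * (Real.exp (2*s) * 2)) s := by
    simp only [Afun]
    have := ((he1.add_const (Real.exp (2*t))).add
      (he2.const_mul (d1 a r β ^ 2))).add_const (d2 a r β ^ 2)
    exact this
  have hDs : HasDerivAt (fun s' => Afun a r β t s' ^ 2 - 16 * r ^ 2 * Real.exp (2*s'+2*t))
      (2 * Afun a r β t s * (Real.exp (2*s+2*t) * 2 + d1 a r β ^ 2 * (Real.exp (2*s) * 2))
        - 16 * r ^ 2 * (Real.exp (2*s+2*t) * 2)) s := by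
    have h1 := hA.pow 2
    have h2 := he1.const_mul (16 * r ^ 2)
    have := h1.sub h2
    exact this.congr_deriv (by ring)
  have hsqrtD : HasDerivAt (fun s' => Real.sqrt (Afun a r β t s' ^ 2 - 16 * r ^ 2 * Real.exp (2*s'+2*t)))
      (1 / (2 * Real.sqrt D)
        * (2 * Afun a r β t s * (Real.exp (2*s+2*t) * 2 + d1 a r β ^ 2 * (Real.exp (2*s) * 2))
          - 16 * r ^ 2 * (Real.exp (2*s+2*t) * 2))) s :=
    (Real.hasDerivAt_sqrt hD.ne').comp s hDs
  have hgD : HasDerivAt g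
      (((Real.exp (2*s+2*t) * 2 - d1 a r β ^ 2 * (Real.exp (2*s) * 2)) * Real.sqrt D
        - (Real.exp (2*s+2*t) + Real.exp (2*t) - d1 a r β ^ 2 * Real.exp (2*s) - d2 a r β ^ 2)
          * (1 / (2 * Real.sqrt D)
            * (2 * Afun a r β t s * (Real.exp (2*s+2*t) * 2 + d1 a r β ^ 2 * (Real.exp (2*s) * 2))
              - 16 * r ^ 2 * (Real.exp (2*s+2*t) * 2))))
        / Real.sqrt D ^ 2) s :=
    hB.div hsqrtD hw.ne'
  rw [hgD.deriv]
  -- rpow to sqrt powers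
  have h32 : D ^ ((3:ℝ)/2) = Real.sqrt D ^ 3 := by
    rw [Real.sqrt_eq_rpow, ← Real.rpow_natCast (D ^ ((1:ℝ)/2)) 3, ← Real.rpow_mul hD.le]
    norm_num
  rw [h32]
  -- key algebraic identity
  have hEE : Real.exp (2*s+2*t) = Real.exp (2*s) * Real.exp (2*t) := by
    rw [← Real.exp_add]
  have hAexp : Afun a r β t s = Real.exp (2 * s + 2 * t) + Real.exp (2 * t)
      + d1 a r β ^ 2 * Real.exp (2 * s) + d2 a r β ^ 2 := rfl
  have key : (Real.exp (2*s+2*t) * 2 - d1 a r β ^ 2 * (Real.exp (2*s) * 2)) * D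
      - (Real.exp (2*s+2*t) + Real.exp (2*t) - d1 a r β ^ 2 * Real.exp (2*s) - d2 a r β ^ 2)
        * (2 * Afun a r β t s * (Real.exp (2*s+2*t) * 2 + d1 a r β ^ 2 * (Real.exp (2*s) * 2))
          - 16 * r ^ 2 * (Real.exp (2*s+2*t) * 2)) / 2
      = 16 * r * Real.exp (2 * s + 2 * t) *
          ((a * Real.cos β - r) * (Real.exp (2 * s + 2 * t) + d2 a r β ^ 2) +
            (a * Real.cos β + r) * (Real.exp (2 * t) + d1 a r β ^ 2 * Real.exp (2 * s))) := by
    rw [hDdef, hAexp, hd1, hd2, hEE]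
    ring
  have := div_sqrt_aux
    (Real.exp (2*s+2*t) * 2 - d1 a r β ^ 2 * (Real.exp (2*s) * 2))
    (Real.exp (2*s+2*t) + Real.exp (2*t) - d1 a r β ^ 2 * Real.exp (2*s) - d2 a r β ^ 2)
    (2 * Afun a r β t s * (Real.exp (2*s+2*t) * 2 + d1 a r β ^ 2 * (Real.exp (2*s) * 2))
      - 16 * r ^ 2 * (Real.exp (2*s+2*t) * 2))
    D
    (16 * r * Real.exp (2 * s + 2 * t) *
          ((a * Real.cos β - r) * (Real.exp (2 * s + 2 * t) + d2 a r β ^ 2) +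
            (a * Real.cos β + r) * (Real.exp (2 * t) + d1 a r β ^ 2 * Real.exp (2 * s))))
    (Real.sqrt D) hw hw2 key
  exact this

end
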